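/- arXiv:1409.7424 — 2 statements merged into one kernel-verified Lean document; each statement's English description precedes it below -/
import Mathlib

section
/- Let ν be a finite Borel measure on ℝ, λ ∈ ℝ, 0 < α ≤ 1, d ≥ 1, β_L = L^{d/α}, and I a symmetric bounded interval. If the upper symmetric α-derivative D^α_ν(λ) = limsup_{ε→0⁺} ν(λ-ε,λ+ε)/(2ε)^α lies in (0, ∞), then there exists a strictly increasing sequence of integers L_n → ∞ such that lim_{n→∞} L_n^d · ν(λ + β_{L_n}^{-1} I) = |I|^α · D^α_ν(λ). -/
open MeasureTheory Filter Set

theorem stmt_7 (ν : Measure ℝ) [IsFiniteMeasure ν] (lam : ℝ)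
    (α : ℝ) (hα0 : 0 < α) (hα1 : α ≤ 1) (d : ℕ) (hd : 1 ≤ d)
    (β : ℕ → ℝ) (hβ : ∀ L : ℕ, β L = (L : ℝ) ^ ((d : ℝ) / α))
    (c : ℝ) (hc : 0 < c) (D : ℝ) (hD0 : 0 < D)
    (hD : D = limsup (fun ε : ℝ =>
      (ν (Icc (lam - ε) (lam + ε))).toReal / (2 * ε) ^ α) (nhdsWithin 0 (Ioi 0))) :
    ∃ Ln : ℕ → ℕ, StrictMono Ln ∧
      Tendsto (fun n : ℕ =>
          ((Ln n : ℝ)) ^ (d : ℕ) *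
            (ν (Icc (lam - c / β (Ln n)) (lam + c / β (Ln n)))).toReal)
        atTop (nhds ((2 * c) ^ α * D)) := by
  classical
  set F : Filter ℝ := nhdsWithin 0 (Ioi 0) with hF
  set g : ℝ → ℝ := fun ε => (ν (Icc (lam - ε) (lam + ε))).toReal with hgdef
  set hfun : ℝ → ℝ := fun ε => g ε / (2 * ε) ^ α with hhdef
  set e : ℕ → ℝ := fun L => c / β L with hedef
  set u : ℕ → ℝ := fun L => (L : ℝ) ^ (d : ℕ) * g (e L) with hudef
  have hdα : (0:ℝ) < (d : ℝ) / α := by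
    apply div_pos _ hα0
    exact_mod_cast Nat.cast_pos.mpr hd
  have hβpos : ∀ L : ℕ, 1 ≤ L → 0 < β L := by
    intro L hL
    rw [hβ]
    exact Real.rpow_pos_of_pos (by exact_mod_cast hL) _
  have hβα : ∀ L : ℕ, (β L) ^ α = (L : ℝ) ^ (d : ℕ) := by
    intro L
    rw [hβ, ← Real.rpow_natCast (L:ℝ) d, ← Real.rpow_mul (Nat.cast_nonneg L),
      div_mul_cancel₀ _ (ne_of_gt hα0)]
  have hepos : ∀ L : ℕ, 1 ≤ L → 0 < e L := fun L hL => div_pos hc (hβpos L hL)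
  have hgnn : ∀ ε : ℝ, 0 ≤ g ε := fun ε => ENNReal.toReal_nonneg
  have hgmono : ∀ a b : ℝ, a ≤ b → g a ≤ g b := by
    intro a b hab
    apply ENNReal.toReal_mono (measure_ne_top ν _)
    exact measure_mono (Icc_subset_Icc (by linarith) (by linarith))
  have h2c : (0:ℝ) < (2 * c) ^ α := Real.rpow_pos_of_pos (by linarith) _
  -- key formula: (2 * e L) ^ α = (2c)^α / L^d
  have h2e : ∀ L : ℕ, 1 ≤ L → (2 * e L) ^ α = (2 * c) ^ α / (L : ℝ) ^ (d : ℕ) := by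
    intro L hL
    have hβL := hβpos L hL
    have : 2 * e L = (2 * c) / β L := by rw [hedef]; ring
    rw [this, Real.div_rpow (by linarith) hβL.le, hβα]
  have hue : ∀ L : ℕ, 1 ≤ L → u L = (2 * c) ^ α * hfun (e L) := by
    intro L hL
    have hLpos : (0:ℝ) < (L : ℝ) ^ (d : ℕ) := pow_pos (by exact_mod_cast hL) d
    rw [hudef, hhdef]
    simp only
    rw [h2e L hL]
    field_simp
  -- boundedness of hfun above along F
  have hbdd : F.IsBoundedUnder (· ≤ ·) hfun := by
    by_contra hb
    have hempty : {a : ℝ | ∀ᶠ ε in F, hfun ε ≤ a} = ∅ := by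
      ext a
      simp only [mem_setOf_eq, mem_empty_iff_false, iff_false]
      intro ha
      exact hb ⟨a, eventually_map.mpr ha⟩
    rw [limsup_eq, hempty, Real.sInf_empty] at hD
    exact absurd hD (by linarith)
  have hmemF : ∀ᶠ ε in F, ε ∈ Ioi (0:ℝ) := eventually_mem_nhdsWithin
  have hnn : F.IsBoundedUnder (· ≥ ·) hfun := by
    refine ⟨0, eventually_map.mpr (hmemF.mono ?_)⟩
    intro ε hε
    exact div_nonneg (hgnn ε) (Real.rpow_nonneg (by simp at hε; linarith) _)
  have hcob : F.IsCoboundedUnder (· ≤ ·) hfun := hnn.isCoboundedUnder_flip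
  -- e tends to 0 from the right
  have hβtop : Tendsto (fun L : ℕ => β L) atTop atTop := by
    simp only [hβ]
    exact (tendsto_rpow_atTop hdα).comp tendsto_natCast_atTop_atTop
  have he0 : Tendsto e atTop (nhds 0) := tendsto_const_nhds.div_atTop hβtop
  have heF : Tendsto e atTop F := by
    apply tendsto_nhdsWithin_of_tendsto_nhds_of_eventually_within _ he0
    filter_upwards [eventually_ge_atTop 1] with L hL
    exact hepos L hL
  -- eventual upper bound for u
  have hevseq : ∀ δ : ℝ, 0 < δ → ∀ᶠ L in atTop, u L < (2 * c) ^ α * D + δ := by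
    intro δ hδ
    have hδ' : 0 < δ / (2 * c) ^ α := div_pos hδ h2c
    have hlt : limsup hfun F < D + δ / (2 * c) ^ α := by rw [← hD]; linarith
    have hev : ∀ᶠ ε in F, hfun ε < D + δ / (2 * c) ^ α :=
      eventually_lt_of_limsup_lt hlt hbdd
    filter_upwards [heF.eventually hev, eventually_ge_atTop 1] with L h1 h2
    rw [hue L h2]
    calc (2 * c) ^ α * hfun (e L) < (2 * c) ^ α * (D + δ / (2 * c) ^ α) :=
          mul_lt_mul_of_pos_left h1 h2c
      _ = (2 * c) ^ α * D + δ := by field_simp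
  -- frequent lower bound for u
  have hfreqseq : ∀ s : ℝ, s < (2 * c) ^ α * D → ∃ᶠ L in atTop, s < u L := by
    intro s hs
    rcases lt_or_ge s 0 with hs0 | hs0
    · apply Eventually.frequently
      filter_upwards [eventually_ge_atTop 1] with L hL
      have : 0 ≤ u L := mul_nonneg (by positivity) (hgnn _)
      linarith
    · set r : ℝ := (s + (2 * c) ^ α * D) / 2 with hrdef
      have hsr : s < r := by rw [hrdef]; linarith
      have hrx : r < (2 * c) ^ α * D := by rw [hrdef]; linarith
      have hr0 : 0 < r := by rw [hrdef]; nlinarith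
      set D' : ℝ := r / (2 * c) ^ α with hD'def
      have hD'0 : 0 < D' := div_pos hr0 h2c
      have hD'D : D' < D := by
        rw [hD'def, div_lt_iff₀ h2c]; nlinarith [mul_comm D ((2*c:ℝ)^α)]
      have hfr : ∃ᶠ ε in F, D' < hfun ε :=
        frequently_lt_of_lt_limsup hcob (by rw [← hD]; exact hD'D)
      -- the ratio correction tends to r
      have hratio : Tendsto (fun K : ℕ => r * ((K : ℝ) / ((K:ℝ) + 1)) ^ (d : ℕ))
          atTop (nhds r) := by
        have h1 : Tendsto (fun K : ℕ => ((K : ℝ) / ((K:ℝ) + 1))) atTop (nhds 1) :=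
          tendsto_natCast_div_add_atTop (1:ℝ)
        have := (h1.pow (d:ℕ)).const_mul r
        simpa using this
      obtain ⟨M₀, hM₀⟩ := eventually_atTop.mp (hratio.eventually (lt_mem_nhds hsr))
      rw [frequently_atTop]
      intro N
      set M : ℕ := max (max N M₀) 1 with hMdef
      have hM1 : 1 ≤ M := le_max_right _ _
      have hMN : N ≤ M := le_trans (le_max_left _ _) (le_max_left _ _)
      have hMM₀ : M₀ ≤ M := le_trans (le_max_right _ _) (le_max_left _ _)
      -- pick ε from the frequently statement inside (0, e M)
      have hIoo : Ioo (0:ℝ) (e M) ∈ F := Ioo_mem_nhdsGT_of_mem ⟨le_refl _, hepos M hM1⟩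
      obtain ⟨ε, hε1, hε2⟩ := (hfr.and_eventually (eventually_mem_set.mpr hIoo)).exists
      obtain ⟨hε0, hεM⟩ := hε2
      have heanti : ∀ a b : ℕ, 1 ≤ a → a ≤ b → e b ≤ e a := by
        intro a b ha hab
        have hb : 1 ≤ b := le_trans ha hab
        apply div_le_div_of_nonneg_left hc.le (hβpos a ha)
        rw [hβ, hβ]
        exact Real.rpow_le_rpow (Nat.cast_nonneg a) (by exact_mod_cast hab) hdα.le
      have hex : ∃ k : ℕ, e (k + 1) < ε := by
        obtain ⟨L₀, hL₀⟩ := eventually_atTop.mp (he0.eventually (gt_mem_nhds hε0))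
        exact ⟨L₀, hL₀ (L₀ + 1) (Nat.le_succ _)⟩
      set K : ℕ := Nat.find hex with hKdef
      have hK1 : e (K + 1) < ε := Nat.find_spec hex
      have hMK : M ≤ K := by
        by_contra hcon
        push_neg at hcon
        have h1 : K + 1 ≤ M := hcon
        have h2 : e M ≤ e (K + 1) := heanti (K + 1) M (Nat.le_add_left 1 K) h1
        linarith
      have hK1' : 1 ≤ K := le_trans hM1 hMK
      have hεK : ε ≤ e K := by
        have h := Nat.find_min hex (show K - 1 < K from Nat.sub_lt hK1' one_pos)
        rw [Nat.sub_add_cancel hK1'] at h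
        exact not_lt.mp h
      refine ⟨K, le_trans hMN hMK, ?_⟩
      have hKpos : (0:ℝ) < (K : ℝ) ^ (d : ℕ) := pow_pos (by exact_mod_cast hK1') d
      have h2ε : (0:ℝ) < (2 * ε) ^ α := Real.rpow_pos_of_pos (by linarith) _
      have hgε : (2 * ε) ^ α * D' < g ε := by
        have h := hε1
        rw [hhdef] at h
        simp only at h
        rw [lt_div_iff₀ h2ε] at h
        linarith [h]
      have hstep1 : (K : ℝ) ^ (d : ℕ) * g ε ≤ u K :=
        mul_le_mul_of_nonneg_left (hgmono ε (e K) hεK) hKpos.le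
      have hrpowlt : (2 * e (K + 1)) ^ α < (2 * ε) ^ α := by
        apply Real.rpow_lt_rpow _ (by linarith) hα0
        have := hepos (K + 1) (Nat.le_add_left 1 K)
        linarith
      have halg : r * ((K : ℝ) / ((K:ℝ) + 1)) ^ (d : ℕ)
          = (K : ℝ) ^ (d : ℕ) * ((2 * e (K + 1)) ^ α * D') := by
        rw [h2e (K + 1) (Nat.le_add_left 1 K)]
        have hr : r = (2 * c) ^ α * D' := by
          rw [hD'def]; field_simp
        have hK1pos : (0:ℝ) < ((K:ℝ) + 1) ^ (d : ℕ) := by positivity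
        have hcast : ((K + 1 : ℕ) : ℝ) = (K : ℝ) + 1 := by push_cast; ring
        rw [hcast, hr, div_pow]
        field_simp
      have hchain : s < u K := by
        have h0 : s < r * ((K : ℝ) / ((K:ℝ) + 1)) ^ (d : ℕ) := hM₀ K (le_trans hMM₀ hMK)
        have h1 : (K : ℝ) ^ (d : ℕ) * ((2 * e (K + 1)) ^ α * D')
            < (K : ℝ) ^ (d : ℕ) * ((2 * ε) ^ α * D') :=
          mul_lt_mul_of_pos_left (mul_lt_mul_of_pos_right hrpowlt hD'0) hKpos
        have h2 : (K : ℝ) ^ (d : ℕ) * ((2 * ε) ^ α * D')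
            < (K : ℝ) ^ (d : ℕ) * g ε :=
          mul_lt_mul_of_pos_left hgε hKpos
        calc s < r * ((K : ℝ) / ((K:ℝ) + 1)) ^ (d : ℕ) := h0
          _ = (K : ℝ) ^ (d : ℕ) * ((2 * e (K + 1)) ^ α * D') := halg
          _ < (K : ℝ) ^ (d : ℕ) * ((2 * ε) ^ α * D') := h1
          _ < (K : ℝ) ^ (d : ℕ) * g ε := h2
          _ ≤ u K := hstep1
      exact hchain
  -- assemble via subsequence extraction
  have hP : ∀ n : ℕ, ∃ᶠ L in atTop,
      (2 * c) ^ α * D - 1 / ((n:ℝ) + 1) < u L ∧ u L < (2 * c) ^ α * D + 1 / ((n:ℝ) + 1) := by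
    intro n
    have hpos : (0:ℝ) < 1 / ((n:ℝ) + 1) := by positivity
    exact (hfreqseq _ (by linarith)).and_eventually (hevseq _ hpos)
  obtain ⟨φ, hφmono, hφ⟩ := extraction_forall_of_frequently hP
  refine ⟨φ, hφmono, ?_⟩
  have h0 : Tendsto (fun n : ℕ => 1 / ((n:ℝ) + 1)) atTop (nhds 0) :=
    tendsto_one_div_add_atTop_nhds_zero_nat
  have hlow : Tendsto (fun n : ℕ => (2 * c) ^ α * D - 1 / ((n:ℝ) + 1)) atTop
      (nhds ((2 * c) ^ α * D)) := by
    simpa using tendsto_const_nhds.sub h0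
  have hhigh : Tendsto (fun n : ℕ => (2 * c) ^ α * D + 1 / ((n:ℝ) + 1)) atTop
      (nhds ((2 * c) ^ α * D)) := by
    simpa using tendsto_const_nhds.add h0
  have hten : Tendsto (fun n => u (φ n)) atTop (nhds ((2 * c) ^ α * D)) := by
    apply tendsto_of_tendsto_of_tendsto_of_le_of_le' hlow hhigh
    · filter_upwards with n
      exact (hφ n).1.le
    · filter_upwards with n
      exact (hφ n).2.le
  exact hten
end

section
/- Let X be a nonnegative-integer-valued random variable and t ∈ ℝ. Then E[e^{itX}] = 1 + E[X](e^{it} - 1) + R, where R = Σ_{k≥2} (e^{itk} - k e^{it} + k - 1)·P(X = k), and |R| ≤ 2·E[X(X-1)]. -/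
open MeasureTheory

namespace Stmt9Aux

open Complex

lemma abs_exp_one (r : ℝ) : ‖Complex.exp (Complex.I * r)‖ = 1 := by
  rw [mul_comm, Complex.norm_exp_ofReal_mul_I]

lemma abs_exp_nat_one (t : ℝ) (n : ℕ) :
    ‖Complex.exp (Complex.I * t * n)‖ = 1 := by
  have : (Complex.I * t * n) = Complex.I * ((t * n : ℝ) : ℂ) := by push_cast; ring
  rw [this, abs_exp_one]

lemma key_bound (t : ℝ) (n : ℕ) :
    ‖Complex.exp (Complex.I * t * n) - n * Complex.exp (Complex.I * t) + n - 1‖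
      ≤ 2 * ((n * (n - 1) : ℕ) : ℝ) := by
  induction n with
  | zero => simp
  | succ n ih =>
    rcases n with _ | m
    · simp
    · set n := m + 1 with hnm
      have hshift : Complex.exp (Complex.I * t * (n + 1 : ℕ)) -
          ((n + 1 : ℕ) : ℂ) * Complex.exp (Complex.I * t) + ((n + 1 : ℕ) : ℂ) - 1
          = (Complex.exp (Complex.I * t * n) - (n : ℂ) * Complex.exp (Complex.I * t)
              + (n : ℂ) - 1)
            + (Complex.exp (Complex.I * t * n) - 1) * (Complex.exp (Complex.I * t) - 1) := by
        have he : Complex.exp (Complex.I * t * ((n : ℕ) + 1 : ℕ))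
            = Complex.exp (Complex.I * t * n) * Complex.exp (Complex.I * t) := by
          rw [← Complex.exp_add]; push_cast; ring_nf
        rw [he]; push_cast; ring
      rw [hshift]
      have h1 : ‖Complex.exp (Complex.I * t * n) - 1‖ ≤ 2 := by
        calc ‖Complex.exp (Complex.I * t * n) - 1‖
            ≤ ‖Complex.exp (Complex.I * t * n)‖ + ‖(1 : ℂ)‖ :=
              (norm_sub_le _ _)
          _ ≤ 2 := by rw [abs_exp_nat_one]; norm_num
      have h2 : ‖Complex.exp (Complex.I * t) - 1‖ ≤ 2 := by
        calc ‖Complex.exp (Complex.I * t) - 1‖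
            ≤ ‖Complex.exp (Complex.I * t)‖ + ‖(1 : ℂ)‖ :=
              (norm_sub_le _ _)
          _ ≤ 2 := by
              rw [abs_exp_one]; norm_num
      calc ‖_‖ ≤ _ + _ := norm_add_le _ _
        _ ≤ 2 * ((n * (n - 1) : ℕ) : ℝ) + 2 * 2 := by
            gcongr
            calc ‖(Complex.exp (Complex.I * t * n) - 1) *
                  (Complex.exp (Complex.I * t) - 1)‖
                = ‖Complex.exp (Complex.I * t * n) - 1‖ *
                  ‖Complex.exp (Complex.I * t) - 1‖ := norm_mul _ _
              _ ≤ 2 * 2 := by exact mul_le_mul h1 h2 (norm_nonneg _) (by norm_num)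
        _ ≤ 2 * (((n + 1) * ((n + 1) - 1) : ℕ) : ℝ) := by
            have e1 : (n * (n - 1) : ℕ) = (m + 1) * m := by simp [hnm]
            have e2 : ((n + 1) * ((n + 1) - 1) : ℕ) = (m + 2) * (m + 1) := by simp [hnm]
            rw [e1, e2]
            push_cast
            nlinarith [Nat.cast_nonneg (α := ℝ) m]

lemma map_single {Ω : Type*} [MeasurableSpace Ω] (μ : Measure Ω) {X : Ω → ℕ}
    (hX : Measurable X) (n : ℕ) : (μ.map X) {n} = μ {ω | X ω = n} := by
  rw [Measure.map_apply hX (measurableSet_singleton n)]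
  rfl

lemma integral_comp_real {Ω : Type*} [MeasurableSpace Ω] (μ : Measure Ω) {X : Ω → ℕ}
    (hX : Measurable X) (g : ℕ → ℝ) (hg : Integrable (fun ω => g (X ω)) μ) :
    ∫ ω, g (X ω) ∂μ = ∑' n, (μ {ω | X ω = n}).toReal * g n := by
  have hsm : StronglyMeasurable g := (measurable_from_nat (f := g)).stronglyMeasurable
  have hgi : Integrable g (μ.map X) :=
    (integrable_map_measure hsm.aestronglyMeasurable hX.aemeasurable).mpr hg
  rw [show (fun ω => g (X ω)) = g ∘ X from rfl] at hg
  rw [show ∫ ω, g (X ω) ∂μ = ∫ n, g n ∂(μ.map X) from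
    (integral_map hX.aemeasurable hsm.aestronglyMeasurable).symm]
  rw [integral_countable' hgi]
  exact tsum_congr fun n => by rw [measureReal_def, map_single μ hX n, smul_eq_mul]

lemma integral_comp_complex {Ω : Type*} [MeasurableSpace Ω] (μ : Measure Ω) {X : Ω → ℕ}
    (hX : Measurable X) (g : ℕ → ℂ) (hg : Integrable (fun ω => g (X ω)) μ) :
    ∫ ω, g (X ω) ∂μ = ∑' n, ((μ {ω | X ω = n}).toReal : ℂ) * g n := by
  have hsm : StronglyMeasurable g := (measurable_from_nat (f := g)).stronglyMeasurable
  have hgi : Integrable g (μ.map X) :=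
    (integrable_map_measure hsm.aestronglyMeasurable hX.aemeasurable).mpr hg
  rw [show ∫ ω, g (X ω) ∂μ = ∫ n, g n ∂(μ.map X) from
    (integral_map hX.aemeasurable hsm.aestronglyMeasurable).symm]
  rw [integral_countable' hgi]
  exact tsum_congr fun n => by rw [measureReal_def, map_single μ hX n, Complex.real_smul]

lemma summable_comp_real {Ω : Type*} [MeasurableSpace Ω] (μ : Measure Ω) {X : Ω → ℕ}
    (hX : Measurable X) (g : ℕ → ℝ) (hg : Integrable (fun ω => g (X ω)) μ) :
    Summable fun n => (μ {ω | X ω = n}).toReal * ‖g n‖ := by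
  have hsm : StronglyMeasurable g := (measurable_from_nat (f := g)).stronglyMeasurable
  have hgi : Integrable g (μ.map X) :=
    (integrable_map_measure hsm.aestronglyMeasurable hX.aemeasurable).mpr hg
  have hfin : (∑' n, (‖g n‖₊ : ENNReal) * (μ.map X) {n}) ≠ ⊤ := by
    rw [← lintegral_countable' (fun n => (‖g n‖₊ : ENNReal))]
    exact hgi.2.ne
  have := ENNReal.summable_toReal hfin
  refine this.congr fun n => ?_
  rw [ENNReal.toReal_mul, map_single μ hX n]
  simp [mul_comm]

lemma tsum_shift2 {M : Type*} [AddCommGroup M] [TopologicalSpace M] [IsTopologicalAddGroup M]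
    [T2Space M] {f : ℕ → M} (hf : Summable f) (h0 : f 0 = 0) (h1 : f 1 = 0) :
    ∑' n, f n = ∑' k, f (k + 2) := by
  rw [Summable.tsum_eq_zero_add hf, Summable.tsum_eq_zero_add ((summable_nat_add_iff 1).mpr hf)]
  simp only [zero_add, h0, h1]

end Stmt9Aux

theorem stmt_9 {Ω : Type*} [MeasurableSpace Ω] (μ : Measure Ω) [IsProbabilityMeasure μ]
    (X : Ω → ℕ) (hX : Measurable X)
    (h1 : Integrable (fun ω => (X ω : ℝ)) μ)
    (h2 : Integrable (fun ω => ((X ω * (X ω - 1) : ℕ) : ℝ)) μ)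
    (t : ℝ) :
    (∫ ω, Complex.exp (Complex.I * t * (X ω : ℂ)) ∂μ)
      = 1 + (∫ ω, (X ω : ℝ) ∂μ : ℝ) * (Complex.exp (Complex.I * t) - 1)
        + ∑' k : ℕ,
            (Complex.exp (Complex.I * t * ((k + 2 : ℕ) : ℂ))
              - ((k + 2 : ℕ) : ℂ) * Complex.exp (Complex.I * t) + ((k + 2 : ℕ) : ℂ) - 1)
            * ((μ {ω | X ω = k + 2}).toReal : ℂ) ∧
    ‖∑' k : ℕ,
        (Complex.exp (Complex.I * t * ((k + 2 : ℕ) : ℂ))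
          - ((k + 2 : ℕ) : ℂ) * Complex.exp (Complex.I * t) + ((k + 2 : ℕ) : ℂ) - 1)
        * ((μ {ω | X ω = k + 2}).toReal : ℂ)‖
      ≤ 2 * ∫ ω, ((X ω * (X ω - 1) : ℕ) : ℝ) ∂μ := by
  classical
  set p : ℕ → ℝ := fun n => (μ {ω | X ω = n}).toReal with hp
  have hprw : ∀ k : ℕ, ((μ {ω | X ω = k + 2}).toReal : ℂ) = ((p (k + 2) : ℝ) : ℂ) :=
    fun _ => rfl
  simp only [hprw]
  have hpnn : ∀ n, 0 ≤ p n := fun n => ENNReal.toReal_nonneg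
  have hEX : ∫ ω, (X ω : ℝ) ∂μ = ∑' n, p n * (n : ℝ) :=
    Stmt9Aux.integral_comp_real μ hX (fun n => (n : ℝ)) h1
  have hSn : Summable fun n => p n * (n : ℝ) := by
    have h := Stmt9Aux.summable_comp_real μ hX (fun n => (n : ℝ)) h1
    exact h.congr fun n => by simp [hp]
  have hEX2 : ∫ ω, ((X ω * (X ω - 1) : ℕ) : ℝ) ∂μ
      = ∑' n, p n * ((n * (n - 1) : ℕ) : ℝ) :=
    Stmt9Aux.integral_comp_real μ hX (fun n => ((n * (n - 1) : ℕ) : ℝ)) h2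
  have hSq : Summable fun n => p n * ((n * (n - 1) : ℕ) : ℝ) := by
    have h := Stmt9Aux.summable_comp_real μ hX (fun n => ((n * (n - 1) : ℕ) : ℝ)) h2
    exact h.congr fun n => by simp [hp]
  have hS1 : Summable p := by
    have h := Stmt9Aux.summable_comp_real μ hX (fun _ => (1 : ℝ)) (integrable_const 1)
    exact h.congr fun n => by simp [hp]
  have hE1 : ∑' n, p n = 1 := by
    have h := Stmt9Aux.integral_comp_real μ hX (fun _ => (1 : ℝ)) (integrable_const 1)
    simpa using h.symm
  -- characteristic function
  have hintc : Integrable (fun ω => Complex.exp (Complex.I * t * (X ω : ℂ))) μ := by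
    refine Integrable.mono' (integrable_const (1 : ℝ)) ?_ ?_
    · exact (Complex.measurable_exp.comp
        (measurable_const.mul (measurable_from_nat.comp hX))).aestronglyMeasurable
    · filter_upwards with ω
      rw [Stmt9Aux.abs_exp_nat_one]
  have hChar : ∫ ω, Complex.exp (Complex.I * t * (X ω : ℂ)) ∂μ
      = ∑' n, ((p n : ℝ) : ℂ) * Complex.exp (Complex.I * t * (n : ℂ)) :=
    Stmt9Aux.integral_comp_complex μ hX (fun n => Complex.exp (Complex.I * t * (n : ℂ))) hintc
  set F : ℕ → ℂ := fun n => Complex.exp (Complex.I * t * (n : ℂ))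
      - (n : ℂ) * Complex.exp (Complex.I * t) + (n : ℂ) - 1 with hF
  have hFb : ∀ n, ‖F n‖ ≤ 2 * ((n * (n - 1) : ℕ) : ℝ) := fun n => by
    rw [hF]; exact Stmt9Aux.key_bound t n
  have hSb : Summable fun n => p n * (2 * ((n * (n - 1) : ℕ) : ℝ)) :=
    (hSq.mul_left 2).congr fun n => mul_left_comm 2 (p n) _
  have hSd : Summable fun n => ((p n : ℝ) : ℂ) * F n := by
    refine Summable.of_norm_bounded hSb fun n => ?_
    rw [norm_mul, Complex.norm_real, Real.norm_of_nonneg (hpnn n)]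
    calc p n * ‖F n‖ ≤ p n * (2 * ((n * (n - 1) : ℕ) : ℝ)) :=
          mul_le_mul_of_nonneg_left (hFb n) (hpnn n)
      _ = p n * (2 * ((n * (n - 1) : ℕ) : ℝ)) := rfl
  have hSbc : Summable fun n => ((p n : ℝ) : ℂ)
      + ((p n * n : ℝ) : ℂ) * (Complex.exp (Complex.I * t) - 1) :=
    (Complex.summable_ofReal.mpr hS1).add ((Complex.summable_ofReal.mpr hSn).mul_right _)
  have htot : ∑' n, ((p n : ℝ) : ℂ) * Complex.exp (Complex.I * t * (n : ℂ))
      = (∑' n, (((p n : ℝ) : ℂ)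
          + ((p n * n : ℝ) : ℂ) * (Complex.exp (Complex.I * t) - 1)))
        + ∑' n, ((p n : ℝ) : ℂ) * F n := by
    rw [← Summable.tsum_add hSbc hSd]
    exact tsum_congr fun n => by rw [hF]; push_cast; ring
  have h1st : ∑' n, (((p n : ℝ) : ℂ)
        + ((p n * n : ℝ) : ℂ) * (Complex.exp (Complex.I * t) - 1))
      = 1 + ((∑' n, p n * (n : ℝ) : ℝ) : ℂ) * (Complex.exp (Complex.I * t) - 1) := by
    rw [Summable.tsum_add (Complex.summable_ofReal.mpr hS1)
      ((Complex.summable_ofReal.mpr hSn).mul_right _), tsum_mul_right,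
      ← Complex.ofReal_tsum, ← Complex.ofReal_tsum, hE1, Complex.ofReal_one]
  have hshift : ∑' n, ((p n : ℝ) : ℂ) * F n = ∑' k, ((p (k + 2) : ℝ) : ℂ) * F (k + 2) := by
    refine Stmt9Aux.tsum_shift2 hSd ?_ ?_
    · simp [hF]
    · simp [hF]
  constructor
  · rw [hChar, htot, h1st, hshift, hEX]
    congr 1
    exact tsum_congr fun k => by rw [hF, mul_comm]
  · have hb : ∀ k : ℕ, ‖F (k + 2) * ((p (k + 2) : ℝ) : ℂ)‖
        ≤ p (k + 2) * (2 * (((k + 2) * ((k + 2) - 1) : ℕ) : ℝ)) := by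
      intro k
      rw [norm_mul, Complex.norm_real, Real.norm_of_nonneg (hpnn _),
        mul_comm]
      exact mul_le_mul_of_nonneg_left (hFb (k + 2)) (hpnn _)
    have hSb2 : Summable fun k => p (k + 2) * (2 * (((k + 2) * ((k + 2) - 1) : ℕ) : ℝ)) :=
      (summable_nat_add_iff 2).mpr hSb
    have hSnorm : Summable fun k => ‖F (k + 2) * ((p (k + 2) : ℝ) : ℂ)‖ :=
      Summable.of_nonneg_of_le (fun k => norm_nonneg _) hb hSb2
    have hgoalsum : (∑' k : ℕ,
        (Complex.exp (Complex.I * t * ((k + 2 : ℕ) : ℂ))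
          - ((k + 2 : ℕ) : ℂ) * Complex.exp (Complex.I * t) + ((k + 2 : ℕ) : ℂ) - 1)
        * ((p (k + 2) : ℝ) : ℂ)) = ∑' k : ℕ, F (k + 2) * ((p (k + 2) : ℝ) : ℂ) :=
      tsum_congr fun k => by rw [hF]
    rw [hgoalsum]
    calc ‖∑' k, F (k + 2) * ((p (k + 2) : ℝ) : ℂ)‖
        = ‖∑' k, F (k + 2) * ((p (k + 2) : ℝ) : ℂ)‖ := rfl
      _ ≤ ∑' k, ‖F (k + 2) * ((p (k + 2) : ℝ) : ℂ)‖ := norm_tsum_le_tsum_norm hSnorm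
      _ ≤ ∑' k, p (k + 2) * (2 * (((k + 2) * ((k + 2) - 1) : ℕ) : ℝ)) :=
          Summable.tsum_le_tsum hb hSnorm hSb2
      _ = ∑' n, p n * (2 * ((n * (n - 1) : ℕ) : ℝ)) :=
          (Stmt9Aux.tsum_shift2 hSb (by simp) (by simp)).symm
      _ = 2 * ∑' n, p n * ((n * (n - 1) : ℕ) : ℝ) := by
          rw [← tsum_mul_left]
          exact tsum_congr fun n => by ring
      _ = 2 * ∫ ω, ((X ω * (X ω - 1) : ℕ) : ℝ) ∂μ := by rw [hEX2]
end
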